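/- For a k-permutation σ of degree n, the following are equivalent: (i) for every interval {a,a+1,…,b} ⊆ {1,…,n} with a < b, the restriction σ^{|{a,…,b}} is k-rooted cuttable; (ii) for every subset L ⊆ {1,…,n} with |L| ≥ 2, the restriction σ^{|L} is k-rooted cuttable. -/

import Mathlib

/-- `σ` is a `k`-permutation of degree `n`: a word over the alphabet `{1, …, n}`
in which every value `i ∈ {1, …, n}` occurs exactly `k` times (and no other
letter occurs). -/
def IsMultiPerm (k n : ℕ) (σ : List ℕ) : Prop :=
  ∀ i : ℕ, σ.count i = if 1 ≤ i ∧ i ≤ n then k else 0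

/-- The restriction `σ^{|L}` of a multipermutation `σ` to a set `L` of values:
delete all letters whose value is not in `L`, and replace, for each `x`, the
`x`-th smallest element of `L` by `x`. -/
def restrict (σ : List ℕ) (L : Finset ℕ) : List ℕ :=
  (σ.filter fun x => decide (x ∈ L)).map fun x => (L.filter fun y => y ≤ x).card

/-- `γ` is a `k`-rooted cut of the `k`-permutation `σ` of degree `n`:
`1 ≤ γ ≤ n - 1` and `σ = μ·ν·ω` where `μ` consists of the first `k` letters of
`σ` and `ν`, `ω` are words such that every letter of `ν` is at most `γ` and
every letter of `ω` is greater than `γ`. -/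
def IsKRootedCut (k n : ℕ) (σ : List ℕ) (γ : ℕ) : Prop :=
  1 ≤ γ ∧ γ ≤ n - 1 ∧
    ∃ μ ν ω : List ℕ,
      σ = μ ++ ν ++ ω ∧ μ.length = k ∧ (∀ x ∈ ν, x ≤ γ) ∧ (∀ x ∈ ω, γ < x)

/-- A `k`-permutation of degree `n` is `k`-rooted cuttable if it has a
`k`-rooted cut. -/
def KRootedCuttable (k n : ℕ) (σ : List ℕ) : Prop :=
  ∃ γ, IsKRootedCut k n σ γ

/-- A `k`-permutation of degree `n` is fully `k`-rooted cuttable if its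
restriction to every interval `{a, …, b} ⊆ {1, …, n}` with `a < b` is
`k`-rooted cuttable. -/
def FullyKRootedCuttable (k n : ℕ) (σ : List ℕ) : Prop :=
  ∀ a b : ℕ, 1 ≤ a → a < b → b ≤ n →
    KRootedCuttable k (Finset.Icc a b).card (restrict σ (Finset.Icc a b))

def rk (L : Finset ℕ) (x : ℕ) : ℕ := (L.filter fun y => y ≤ x).card

lemma restrict_eq (σ : List ℕ) (L : Finset ℕ) :
    restrict σ L = (σ.filter fun x => decide (x ∈ L)).map (rk L) := rfl

lemma rk_lt_rk {L : Finset ℕ} {x c : ℕ} (hc : c ∈ L) (h : x < c) : rk L x < rk L c := by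
  have hsub : L.filter (fun y => y ≤ x) ⊆ L.filter (fun y => y ≤ c) := by
    intro y hy; rw [Finset.mem_filter] at hy ⊢; exact ⟨hy.1, by omega⟩
  have hnot : c ∉ L.filter (fun y => y ≤ x) := by
    simp only [Finset.mem_filter, not_and]; intro _; omega
  exact Finset.card_lt_card ((Finset.ssubset_iff_of_subset hsub).mpr
    ⟨c, Finset.mem_filter.mpr ⟨hc, le_refl c⟩, hnot⟩)

lemma rk_insert_lt {L : Finset ℕ} {c x : ℕ} (h : x < c) :
    rk (insert c L) x = rk L x := by
  simp only [rk, Finset.filter_insert, if_neg (by omega : ¬ c ≤ x)]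

lemma rk_insert_le {L : Finset ℕ} {c x : ℕ} (hc : c ∉ L) (h : c ≤ x) :
    rk (insert c L) x = rk L x + 1 := by
  simp only [rk, Finset.filter_insert, if_pos h]
  exact Finset.card_insert_of_notMem (by simp [Finset.mem_filter, hc])

lemma rk_pos {L : Finset ℕ} {x : ℕ} (hx : x ∈ L) : 1 ≤ rk L x :=
  Finset.card_pos.mpr ⟨x, Finset.mem_filter.mpr ⟨hx, le_refl x⟩⟩

lemma rk_le_card (L : Finset ℕ) (x : ℕ) : rk L x ≤ L.card :=
  Finset.card_filter_le _ _

lemma recut {k γ : ℕ} {τ μ ν ω : List ℕ} (h : τ = μ ++ ν ++ ω) (hμ : μ.length ≤ k)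
    (hlen : k ≤ τ.length) (hν : ∀ x ∈ ν, x ≤ γ) (hω : ∀ x ∈ ω, γ < x) :
    ∃ μ' ν' ω', τ = μ' ++ ν' ++ ω' ∧ μ'.length = k ∧
      (∀ x ∈ ν', x ≤ γ) ∧ (∀ x ∈ ω', γ < x) := by
  have h2 : τ.drop k = ν.drop (k - μ.length) ++ ω.drop (k - μ.length - ν.length) := by
    rw [h, List.append_assoc, List.drop_append,
      List.drop_eq_nil_of_le hμ, List.nil_append, List.drop_append]
  refine ⟨τ.take k, ν.drop (k - μ.length), ω.drop (k - μ.length - ν.length), ?_,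
    by rw [List.length_take]; omega,
    fun x hx => hν x (List.mem_of_mem_drop hx),
    fun x hx => hω x (List.mem_of_mem_drop hx)⟩
  rw [List.append_assoc, ← h2, List.take_append_drop]

lemma length_restrict_ge {k n : ℕ} {σ : List ℕ} (hσ : IsMultiPerm k n σ) {L : Finset ℕ}
    (hL : L ⊆ Finset.Icc 1 n) (hne : L.Nonempty) : k ≤ (restrict σ L).length := by
  obtain ⟨i, hi⟩ := hne
  have hi' := Finset.mem_Icc.mp (hL hi)
  have hcount : σ.count i = k := by rw [hσ i, if_pos hi']
  have hcnt2 : (σ.filter fun x => decide (x ∈ L)).count i = k := by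
    rw [List.count_filter (by simp [hi]), hcount]
  calc k = (σ.filter fun x => decide (x ∈ L)).count i := hcnt2.symm
    _ ≤ (σ.filter fun x => decide (x ∈ L)).length := List.count_le_length
    _ = (restrict σ L).length := by rw [restrict_eq, List.length_map]

lemma interval_case {k n : ℕ} {σ : List ℕ} (hF : FullyKRootedCuttable k n σ)
    {L : Finset ℕ} (hne : L.Nonempty) (hL : L ⊆ Finset.Icc 1 n) (hcard : 2 ≤ L.card)
    (hI : Finset.Icc (L.min' hne) (L.max' hne) ⊆ L) :
    KRootedCuttable k L.card (restrict σ L) := by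
  have hLI : L = Finset.Icc (L.min' hne) (L.max' hne) :=
    Finset.Subset.antisymm
      (fun x hx => Finset.mem_Icc.mpr ⟨L.min'_le x hx, L.le_max' x hx⟩) hI
  have ha1 : 1 ≤ L.min' hne := (Finset.mem_Icc.mp (hL (L.min'_mem hne))).1
  have hb : L.max' hne ≤ n := (Finset.mem_Icc.mp (hL (L.max'_mem hne))).2
  have hab : L.min' hne < L.max' hne := by
    obtain ⟨i, hi, j, hj, hij⟩ := Finset.one_lt_card.mp (show 1 < L.card by omega)
    exact Finset.min'_lt_max' L hi hj hij
  have := hF (L.min' hne) (L.max' hne) ha1 hab hb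
  rwa [← hLI] at this

lemma main_aux (k n : ℕ) (σ : List ℕ) (hσ : IsMultiPerm k n σ)
    (hF : FullyKRootedCuttable k n σ) :
    ∀ m : ℕ, ∀ L : Finset ℕ, L ⊆ Finset.Icc 1 n → 2 ≤ L.card → n - L.card ≤ m →
      KRootedCuttable k L.card (restrict σ L) := by
  intro m
  induction m with
  | zero =>
    intro L hL hcard hm
    have hne : L.Nonempty := Finset.card_pos.mp (by omega)
    have hcardIcc : (Finset.Icc 1 n).card = n := by rw [Nat.card_Icc]; omega
    refine interval_case hF hne hL hcard ?_
    have hLeq : L = Finset.Icc 1 n :=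
      Finset.eq_of_subset_of_card_le hL (by omega)
    intro x hx
    rw [Finset.mem_Icc] at hx
    have h1 := (Finset.mem_Icc.mp (hL (L.min'_mem hne))).1
    have h2 := (Finset.mem_Icc.mp (hL (L.max'_mem hne))).2
    rw [hLeq]; exact Finset.mem_Icc.mpr ⟨by omega, by omega⟩
  | succ m ih =>
    intro L hL hcard hm
    have hne : L.Nonempty := Finset.card_pos.mp (by omega)
    by_cases hI : Finset.Icc (L.min' hne) (L.max' hne) ⊆ L
    · exact interval_case hF hne hL hcard hI
    obtain ⟨c, hcIcc, hcL⟩ := Finset.not_subset.mp hI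
    rw [Finset.mem_Icc] at hcIcc
    have hamem := Finset.mem_Icc.mp (hL (L.min'_mem hne))
    have hbmem := Finset.mem_Icc.mp (hL (L.max'_mem hne))
    have hac : L.min' hne < c :=
      lt_of_le_of_ne hcIcc.1 (fun h => hcL (h ▸ L.min'_mem hne))
    have hcb : c < L.max' hne :=
      lt_of_le_of_ne hcIcc.2 (by rintro rfl; exact hcL (L.max'_mem hne))
    set L' := insert c L with hL'def
    have hcardL' : L'.card = L.card + 1 := Finset.card_insert_of_notMem hcL
    have hL'sub : L' ⊆ Finset.Icc 1 n := by
      rw [Finset.insert_subset_iff]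
      exact ⟨Finset.mem_Icc.mpr ⟨by omega, by omega⟩, hL⟩
    have hcardn : L'.card ≤ n := by
      have := Finset.card_le_card hL'sub
      rw [Nat.card_Icc] at this; omega
    obtain ⟨γ, hγ1, hγ2, μ, ν, ω, hdec, hμk, hν, hω⟩ :=
      ih L' hL'sub (by omega) (by omega)
    have hγ2' : γ ≤ L.card := by omega
    set p := rk L' c with hpdef
    have hcin : c ∈ L' := Finset.mem_insert_self c L
    have hain : L.min' hne ∈ L' := Finset.mem_insert_of_mem (L.min'_mem hne)
    have hbin : L.max' hne ∈ L' := Finset.mem_insert_of_mem (L.max'_mem hne)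
    have hp2 : 2 ≤ p := by
      have h1 := rk_pos hain
      have h2 := rk_lt_rk hcin hac
      omega
    have hpcard : p ≤ L.card := by
      have h2 := rk_lt_rk hbin hcb
      have h3 := rk_le_card L' (L.max' hne)
      omega
    have hdec' : (σ.filter fun x => decide (x ∈ L')).map (rk L') = μ ++ (ν ++ ω) := by
      rw [← restrict_eq, hdec, List.append_assoc]
    obtain ⟨A, BC, hsplit1, hA, hBC⟩ := List.map_eq_append_iff.mp hdec'
    obtain ⟨B, C, hsplit2, hB, hC⟩ := List.map_eq_append_iff.mp hBC
    have hfilt : σ.filter (fun x => decide (x ∈ L)) =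
        (σ.filter fun x => decide (x ∈ L')).filter (fun x => decide (x ∈ L)) := by
      rw [List.filter_filter]
      apply List.filter_congr
      intro x _
      by_cases h : x ∈ L
      · simp [h, hL'def, Finset.mem_insert_of_mem h]
      · simp [h]
    set γ' := if p ≤ γ then γ - 1 else γ with hγ'def
    have key_lo : ∀ x ∈ B, x ∈ L → rk L x ≤ γ' := by
      intro x hxB hxL
      have hx' : rk L' x ≤ γ := hν _ (hB ▸ List.mem_map_of_mem hxB)
      have hxc : x ≠ c := fun h => hcL (h ▸ hxL)
      rcases lt_or_gt_of_ne hxc with hlt | hgt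
      · have hEq : rk L' x = rk L x := rk_insert_lt hlt
        have hstrict : rk L' x < p := rk_lt_rk hcin hlt
        by_cases hpγ : p ≤ γ <;> simp only [hγ'def, if_pos, if_neg, hpγ, if_true, if_false] <;> omega
      · have hEq : rk L' x = rk L x + 1 := rk_insert_le hcL hgt.le
        have hpx : p < rk L' x := rk_lt_rk (Finset.mem_insert_of_mem hxL) hgt
        by_cases hpγ : p ≤ γ <;> simp only [hγ'def, hpγ, if_true, if_false] <;> omega
    have key_hi : ∀ x ∈ C, x ∈ L → γ' < rk L x := by
      intro x hxC hxL
      have hx' : γ < rk L' x := hω _ (hC ▸ List.mem_map_of_mem hxC)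
      have hxc : x ≠ c := fun h => hcL (h ▸ hxL)
      rcases lt_or_gt_of_ne hxc with hlt | hgt
      · have hEq : rk L' x = rk L x := rk_insert_lt hlt
        by_cases hpγ : p ≤ γ <;> simp only [hγ'def, hpγ, if_true, if_false] <;> omega
      · have hEq : rk L' x = rk L x + 1 := rk_insert_le hcL hgt.le
        have hpx : p < rk L' x := rk_lt_rk (Finset.mem_insert_of_mem hxL) hgt
        by_cases hpγ : p ≤ γ <;> simp only [hγ'def, hpγ, if_true, if_false] <;> omega
    have hτ : restrict σ L =
        ((A.filter fun x => decide (x ∈ L)).map (rk L)) ++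
        ((B.filter fun x => decide (x ∈ L)).map (rk L)) ++
        ((C.filter fun x => decide (x ∈ L)).map (rk L)) := by
      rw [restrict_eq, hfilt, hsplit1, hsplit2]
      simp [List.filter_append, List.map_append, List.append_assoc]
    have hALk : ((A.filter fun x => decide (x ∈ L)).map (rk L)).length ≤ k := by
      have h1 := List.length_filter_le (fun x => decide (x ∈ L)) A
      have hAl : A.length = k := by rw [← hμk, ← hA, List.length_map]
      rw [List.length_map]; omega
    have hlen : k ≤ (restrict σ L).length := length_restrict_ge hσ hL hne
    have hνmid : ∀ y ∈ (B.filter fun x => decide (x ∈ L)).map (rk L), y ≤ γ' := by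
      intro y hy
      obtain ⟨x, hx, rfl⟩ := List.mem_map.mp hy
      have hx' := List.mem_filter.mp hx
      exact key_lo x hx'.1 (by simpa using hx'.2)
    have hωmid : ∀ y ∈ (C.filter fun x => decide (x ∈ L)).map (rk L), γ' < y := by
      intro y hy
      obtain ⟨x, hx, rfl⟩ := List.mem_map.mp hy
      have hx' := List.mem_filter.mp hx
      exact key_hi x hx'.1 (by simpa using hx'.2)
    obtain ⟨μ', ν', ω', hdecomp, hμ'len, hν', hω'⟩ := recut hτ hALk hlen hνmid hωmid
    refine ⟨γ', ?_, ?_, μ', ν', ω', hdecomp, hμ'len, hν', hω'⟩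
    · by_cases hpγ : p ≤ γ <;> simp only [hγ'def, hpγ, if_true, if_false] <;> omega
    · by_cases hpγ : p ≤ γ <;> simp only [hγ'def, hpγ, if_true, if_false] <;> omega

/-- For a `k`-permutation `σ` of degree `n`, the following are equivalent:
(i) the restriction of `σ` to every interval `{a, …, b} ⊆ {1, …, n}` with
`a < b` is `k`-rooted cuttable (i.e. `σ` is fully `k`-rooted cuttable);
(ii) the restriction of `σ` to every subset `L ⊆ {1, …, n}` with `|L| ≥ 2`
is `k`-rooted cuttable. -/
theorem fullyKRootedCuttable_iff (k n : ℕ) (hk : 1 ≤ k) (hn : 1 ≤ n)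
    (σ : List ℕ) (hσ : IsMultiPerm k n σ) :
    FullyKRootedCuttable k n σ ↔
      ∀ L : Finset ℕ, L ⊆ Finset.Icc 1 n → 2 ≤ L.card →
        KRootedCuttable k L.card (restrict σ L) := by
  constructor
  · intro hF L hL hcard
    exact main_aux k n σ hσ hF (n - L.card) L hL hcard le_rfl
  · intro h a b ha hab hb
    refine h (Finset.Icc a b) (Finset.Icc_subset_Icc ha hb) ?_
    rw [Nat.card_Icc]; omega
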